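/- For all v, w ∈ W, (h_v, ĥ_{w0 w})^H = δ_{v,w} (Kronecker delta), where w0 is the longest element of W. -/

import Mathlib

open CoxeterSystem


namespace HeckeOrthAux

open Multiplicative

/-- Conjugation action of `W` on `W → Multiplicative (ZMod 2)`. -/
def cphi (W : Type*) [Group W] : W →* MulAut (W → Multiplicative (ZMod 2)) where
  toFun w :=
    { toFun := fun f t => f (w⁻¹ * t * w)
      invFun := fun f t => f (w * t * w⁻¹)
      left_inv := fun f => by funext t; simp [mul_assoc]
      right_inv := fun f => by funext t; simp [mul_assoc]
      map_mul' := fun f g => rfl }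
  map_one' := by ext f t; simp
  map_mul' := fun u v => by ext f t; simp [mul_assoc]

lemma cphi_apply {W : Type*} [Group W] (w : W) (f : W → Multiplicative (ZMod 2)) (t : W) :
    cphi W w f t = f (w⁻¹ * t * w) := rfl

variable {W : Type*} [Group W]

lemma sdp_pow_left {N G : Type*} [CommGroup N] [Group G] (φ : G →* MulAut N)
    (x : SemidirectProduct N G φ) (m : ℕ) :
    (x ^ m).left = ∏ k ∈ Finset.range m, φ (x.right ^ k) x.left ∧
      (x ^ m).right = x.right ^ m := by
  induction m with
  | zero => simp
  | succ m ih =>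
    rw [pow_succ]
    constructor
    · rw [SemidirectProduct.mul_left, ih.1, ih.2, Finset.prod_range_succ]
    · rw [SemidirectProduct.mul_right, ih.2, pow_succ]

lemma pow_mul_swap (a b : W) (k : ℕ) : (a * b) ^ k * a = a * (b * a) ^ k := by
  induction k with
  | zero => simp
  | succ k ih =>
    rw [pow_succ', mul_assoc, ih, pow_succ']
    simp [mul_assoc]

lemma inv_of_sq_one {a : W} (ha : a * a = 1) : a⁻¹ = a := by
  rw [← mul_one a⁻¹, ← ha, ← mul_assoc, inv_mul_cancel, one_mul]

lemma conj_pow_simple {a b : W} (ha : a * a = 1) (hb : b * b = 1) (k : ℕ) :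
    (a * b) ^ k * a = a * ((a * b) ^ k)⁻¹ := by
  rw [pow_mul_swap, ← inv_pow]
  congr 2
  rw [mul_inv_rev, inv_of_sq_one ha, inv_of_sq_one hb]

lemma conj_eq_iff (g t c : W) : g⁻¹ * t * g = c ↔ t = g * c * g⁻¹ := by
  constructor
  · intro h; rw [← h]; group
  · intro h; rw [h]; group

lemma prod_pair {α : Type*} [CommMonoid α] (g : ℕ → α) (m : ℕ) :
    ∏ k ∈ Finset.range m, (g (2*k) * g (2*k+1)) = ∏ l ∈ Finset.range (2*m), g l := by
  induction m with
  | zero => simp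
  | succ m ih =>
    rw [Finset.prod_range_succ, ih, show 2*(m+1) = (2*m + 1) + 1 by ring,
      Finset.prod_range_succ, Finset.prod_range_succ, mul_assoc]

lemma sq_one (z : Multiplicative (ZMod 2)) : z * z = 1 := by
  revert z; decide

variable [DecidableEq W] {B : Type*} {M : CoxeterMatrix B}

/-- The generators for the Tits reflection cocycle. -/
def gfun (cs : CoxeterSystem M W) (i : B) :
    SemidirectProduct (W → Multiplicative (ZMod 2)) W (cphi W) :=
  ⟨fun t => if t = cs.simple i then ofAdd 1 else 1, cs.simple i⟩

lemma liftable (cs : CoxeterSystem M W) : M.IsLiftable (gfun cs) := by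
  intro i j
  set a := cs.simple i with ha_def
  set b := cs.simple j with hb_def
  have ha : a * a = 1 := cs.simple_mul_simple_self i
  have hb : b * b = 1 := cs.simple_mul_simple_self j
  have hp : (a * b) ^ M i j = 1 := cs.simple_mul_simple_pow i j
  set m := M i j with hm_def
  set x := gfun cs i * gfun cs j with hx_def
  have hxr : x.right = a * b := rfl
  have key := sdp_pow_left (cphi W) x m
  have E1 : ∀ k : ℕ, (a*b)^k * a * ((a*b)^k)⁻¹ = a * ((a*b)^(2*k))⁻¹ := by
    intro k
    rw [conj_pow_simple ha hb, mul_assoc, ← mul_inv_rev, ← pow_add, two_mul]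
  have hainv : a⁻¹ = a := inv_of_sq_one ha
  have E2 : ∀ k : ℕ, ((a*b)^k * a) * b * ((a*b)^k * a)⁻¹ = a * ((a*b)^(2*k+1))⁻¹ := by
    intro k
    calc ((a*b)^k * a) * b * ((a*b)^k * a)⁻¹
        = (a*b)^(k+1) * a * ((a*b)^k)⁻¹ := by
          rw [mul_inv_rev, hainv, pow_succ]; group
      _ = a * ((a*b)^(k+1))⁻¹ * ((a*b)^k)⁻¹ := by rw [conj_pow_simple ha hb]
      _ = a * ((a*b)^(k + (k+1)))⁻¹ := by rw [mul_assoc, ← mul_inv_rev, ← pow_add]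
      _ = a * ((a*b)^(2*k+1))⁻¹ := by rw [show k + (k+1) = 2*k+1 from by omega]
  have hone : (1 : SemidirectProduct (W → Multiplicative (ZMod 2)) W (cphi W)) = ⟨1, 1⟩ := rfl
  have hleft : (x ^ m).left = 1 := by
    rw [key.1]
    funext t
    rw [Finset.prod_apply]
    have hterm : ∀ k ∈ Finset.range m,
        (cphi W (x.right ^ k) x.left) t =
          (fun l => if t = a * ((a*b)^l)⁻¹ then ofAdd (1 : ZMod 2) else 1) (2*k) *
          (fun l => if t = a * ((a*b)^l)⁻¹ then ofAdd (1 : ZMod 2) else 1) (2*k+1) := by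
      intro k _
      have hx1 : (cphi W (x.right ^ k) x.left) t =
          (if ((a*b)^k)⁻¹ * t * (a*b)^k = a then ofAdd (1:ZMod 2) else 1) *
          (if a⁻¹ * (((a*b)^k)⁻¹ * t * (a*b)^k) * a = b then ofAdd (1:ZMod 2) else 1) := rfl
      rw [hx1]
      have c1 : (((a*b)^k)⁻¹ * t * (a*b)^k = a) ↔ (t = a * ((a*b)^(2*k))⁻¹) := by
        rw [conj_eq_iff, E1]
      have e : a⁻¹ * (((a*b)^k)⁻¹ * t * (a*b)^k) * a
          = ((a*b)^k * a)⁻¹ * t * ((a*b)^k * a) := by group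
      have c2 : (a⁻¹ * (((a*b)^k)⁻¹ * t * (a*b)^k) * a = b)
          ↔ (t = a * ((a*b)^(2*k+1))⁻¹) := by
        rw [e, conj_eq_iff, E2]
      simp only [c1, c2]
    rw [Finset.prod_congr rfl hterm,
      prod_pair (fun l => if t = a * ((a*b)^l)⁻¹ then ofAdd (1 : ZMod 2) else 1) m,
      show 2*m = m + m by ring, Finset.prod_range_add]
    have hshift : ∀ l ∈ Finset.range m,
        (fun l => if t = a * ((a*b)^l)⁻¹ then ofAdd (1 : ZMod 2) else 1) (m + l) =
        (fun l => if t = a * ((a*b)^l)⁻¹ then ofAdd (1 : ZMod 2) else 1) l := by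
      intro l _
      simp only [pow_add, hp, one_mul]
    rw [Finset.prod_congr rfl hshift, sq_one]
    rfl
  have hright : (x ^ m).right = 1 := by rw [key.2, hxr, hp]
  calc x ^ m = ⟨(x ^ m).left, (x ^ m).right⟩ := rfl
    _ = ⟨1, 1⟩ := by rw [hleft, hright]
    _ = 1 := rfl


section
variable {W : Type*} [Group W] [DecidableEq W] {B : Type*} {M : CoxeterMatrix B}

lemma gfun_def (cs : CoxeterSystem M W) (i : B) :
    gfun cs i = ⟨fun t => if t = cs.simple i then ofAdd 1 else 1, cs.simple i⟩ := rfl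

noncomputable def ncoc (cs : CoxeterSystem M W) :
    W →* SemidirectProduct (W → Multiplicative (ZMod 2)) W (cphi W) :=
  cs.lift ⟨gfun cs, liftable cs⟩

lemma ncoc_simple (cs : CoxeterSystem M W) (i : B) :
    ncoc cs (cs.simple i) = gfun cs i :=
  cs.lift_apply_simple (liftable cs) i

lemma ncoc_right (cs : CoxeterSystem M W) (w : W) : (ncoc cs w).right = w := by
  have h : SemidirectProduct.rightHom.comp (ncoc cs) = MonoidHom.id W := by
    apply cs.ext_simple
    intro i
    rw [MonoidHom.comp_apply, ncoc_simple, gfun_def]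
    rfl
  exact DFunLike.congr_fun h w

/-- The Tits reflection cocycle. -/
noncomputable def nf (cs : CoxeterSystem M W) (w : W) : W → Multiplicative (ZMod 2) :=
  (ncoc cs w).left

lemma nf_one (cs : CoxeterSystem M W) : nf cs 1 = 1 := by
  unfold nf; rw [map_one]; rfl

lemma nf_mul (cs : CoxeterSystem M W) (u v : W) (t : W) :
    nf cs (u * v) t = nf cs u t * nf cs v (u⁻¹ * t * u) := by
  unfold nf
  rw [map_mul, SemidirectProduct.mul_left, ncoc_right]
  rw [Pi.mul_apply, cphi_apply]

lemma nf_simple (cs : CoxeterSystem M W) (i : B) (t : W) :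
    nf cs (cs.simple i) t = if t = cs.simple i then ofAdd 1 else 1 := by
  unfold nf
  rw [ncoc_simple, gfun_def]

lemma nf_wordProd (cs : CoxeterSystem M W) (ω : List B) (t : W) :
    nf cs (cs.wordProd ω) t = ofAdd (((cs.leftInvSeq ω).count t : ℕ) : ZMod 2) := by
  induction ω generalizing t with
  | nil =>
    rw [cs.wordProd_nil, cs.leftInvSeq_nil, nf_one, Pi.one_apply, List.count_nil,
      Nat.cast_zero]
    rfl
  | cons i ω ih =>
    rw [cs.wordProd_cons, nf_mul, nf_simple, cs.inv_simple, ih]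
    have hlis : cs.leftInvSeq (i :: ω)
        = cs.simple i :: List.map (⇑(MulAut.conj (cs.simple i))) (cs.leftInvSeq ω) := rfl
    rw [hlis, List.count_cons]
    have hfx : (MulAut.conj (cs.simple i)) (cs.simple i * t * cs.simple i) = t := by
      rw [MulAut.conj_apply, cs.inv_simple]
      simp [mul_assoc, cs.simple_mul_simple_self, cs.simple_mul_simple_cancel_left]
    have hcnt := List.count_map_of_injective (cs.leftInvSeq ω)
      (⇑(MulAut.conj (cs.simple i))) (MulAut.conj (cs.simple i)).injective
      (cs.simple i * t * cs.simple i)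
    rw [hfx] at hcnt
    rw [hcnt]
    simp only [beq_iff_eq]
    by_cases ht : t = cs.simple i
    · rw [if_pos ht, if_pos ht.symm, Nat.cast_add, Nat.cast_one, ofAdd_add]
      exact mul_comm _ _
    · rw [if_neg ht, if_neg (fun hh => ht hh.symm), Nat.add_zero, one_mul]

lemma exists_invFinset (cs : CoxeterSystem M W) (w : W) :
    ∃ A : Finset W, A.card = cs.length w ∧ (∀ t, t ∈ A ↔ nf cs w t = ofAdd 1) ∧
      (∀ t ∈ A, cs.IsReflection t ∧ cs.length (t * w) < cs.length w) := by
  obtain ⟨ω, hred, rfl⟩ := cs.exists_reduced_word' w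
  have hnd : (cs.leftInvSeq ω).Nodup := hred.nodup_leftInvSeq
  refine ⟨(cs.leftInvSeq ω).toFinset, ?_, ?_, ?_⟩
  · rw [List.toFinset_card_of_nodup hnd, cs.length_leftInvSeq]
    exact hred.symm
  · intro t
    rw [List.mem_toFinset]
    constructor
    · intro hmem
      rw [nf_wordProd, List.count_eq_one_of_mem hnd hmem, Nat.cast_one]
    · intro hval
      by_contra hmem
      rw [nf_wordProd, List.count_eq_zero_of_not_mem hmem, Nat.cast_zero] at hval
      exact absurd hval (by decide)
  · intro t hmem
    rw [List.mem_toFinset] at hmem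
    exact ⟨cs.isReflection_of_mem_leftInvSeq ω hmem,
      (cs.isLeftInversion_of_mem_leftInvSeq hred hmem).2⟩

lemma nf_inv_conj (cs : CoxeterSystem M W) (u : W) (y : W) :
    nf cs u⁻¹ (u⁻¹ * y * u) = (nf cs u y)⁻¹ := by
  have h := nf_mul cs u u⁻¹ y
  rw [mul_inv_cancel, nf_one, Pi.one_apply] at h
  exact (inv_eq_of_mul_eq_one_right h.symm).symm

lemma nf_reflection_self (cs : CoxeterSystem M W) {t : W} (ht : cs.IsReflection t) :
    nf cs t t = ofAdd 1 := by
  obtain ⟨u, i, rfl⟩ := ht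
  have key : u * cs.simple i * u⁻¹ = u * (cs.simple i * u⁻¹) := by rw [mul_assoc]
  rw [key, nf_mul]
  have hT : u⁻¹ * (u * (cs.simple i * u⁻¹)) * u = cs.simple i := by group
  rw [hT, nf_mul, cs.inv_simple]
  have h2 : cs.simple i * cs.simple i * cs.simple i = cs.simple i := by
    rw [cs.simple_mul_simple_self, one_mul]
  rw [h2, nf_simple, if_pos rfl]
  have h3 : nf cs u⁻¹ (cs.simple i) = (nf cs u (u * (cs.simple i * u⁻¹)))⁻¹ := by
    have h4 := nf_inv_conj cs u (u * (cs.simple i * u⁻¹))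
    rw [hT] at h4
    exact h4
  rw [h3]
  generalize nf cs u (u * (cs.simple i * u⁻¹)) = x
  rw [mul_comm (ofAdd (1 : ZMod 2)) x⁻¹, ← mul_assoc, mul_inv_cancel, one_mul]

theorem length_add_of_max (cs : CoxeterSystem M W) (w0 : W)
    (hw0 : ∀ u : W, cs.length u ≤ cs.length w0) (w : W) :
    cs.length w + cs.length (w⁻¹ * w0) = cs.length w0 := by
  have two : ∀ z : Multiplicative (ZMod 2), z = 1 ∨ z = ofAdd 1 := by decide
  have hrefl : ∀ t : W, cs.IsReflection t → nf cs w0 t = ofAdd 1 := by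
    intro t ht
    rcases two (nf cs w0 t) with h0 | h1
    · exfalso
      have htw : nf cs (t * w0) t = ofAdd 1 := by
        rw [nf_mul]
        have he : t⁻¹ * t * t = t := by group
        rw [he, h0, nf_reflection_self cs ht, mul_one]
      obtain ⟨A, hcard, hmem, hprop⟩ := exists_invFinset cs (t * w0)
      have htA : t ∈ A := (hmem t).mpr htw
      have hlt := (hprop t htA).2
      rw [← mul_assoc, ht.mul_self, one_mul] at hlt
      exact absurd (hw0 (t * w0)) (by omega)
    · exact h1
  set z := w⁻¹ * w0 with hz
  have hwz : w * z = w0 := by rw [hz]; group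
  obtain ⟨Aw, hcw, hmw, hpw⟩ := exists_invFinset cs w
  obtain ⟨Az, hcz, hmz, hpz⟩ := exists_invFinset cs z
  obtain ⟨A0, hc0, hm0, hp0⟩ := exists_invFinset cs w0
  have hinj : Function.Injective (fun t : W => w * t * w⁻¹) := by
    intro x y hxy
    simp only [] at hxy
    rw [mul_left_inj, mul_right_inj] at hxy
    exact hxy
  set Bf := Az.image (fun t => w * t * w⁻¹) with hB
  have hcB : Bf.card = cs.length z := by
    rw [hB, Finset.card_image_of_injective _ hinj, hcz]
  have hmB : ∀ t : W, t ∈ Bf ↔ nf cs z (w⁻¹ * t * w) = ofAdd 1 := by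
    intro t
    rw [hB, Finset.mem_image]
    constructor
    · rintro ⟨x, hx, rfl⟩
      have he : w⁻¹ * (w * x * w⁻¹) * w = x := by group
      rw [he]
      exact (hmz x).mp hx
    · intro hval
      exact ⟨w⁻¹ * t * w, (hmz _).mpr hval, by group⟩
  have hsplit : ∀ t : W, nf cs w0 t = nf cs w t * nf cs z (w⁻¹ * t * w) := by
    intro t; rw [← hwz, nf_mul]
  have hreflB : ∀ t ∈ Bf, cs.IsReflection t := by
    intro t htB
    rw [hB, Finset.mem_image] at htB
    obtain ⟨x, hx, rfl⟩ := htB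
    exact (hpz x hx).1.conj w
  have hdisj : Disjoint Aw Bf := by
    rw [Finset.disjoint_left]
    intro t htA htB
    have h1 := (hmw t).mp htA
    have h2 := (hmB t).mp htB
    have h3 := hsplit t
    rw [h1, h2, hrefl t ((hpw t htA).1)] at h3
    exact absurd h3 (by decide)
  have hun : A0 = Aw ∪ Bf := by
    apply Finset.ext
    intro t
    rw [Finset.mem_union]
    constructor
    · intro h0
      have h0v := (hm0 t).mp h0
      rcases two (nf cs w t) with h | h
      · right
        apply (hmB t).mpr
        have h5 := hsplit t
        rw [h, one_mul] at h5
        rw [← h5]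
        exact h0v
      · left; exact (hmw t).mpr h
    · intro hor
      apply (hm0 t).mpr
      rcases hor with h | h
      · exact hrefl t ((hpw t h).1)
      · exact hrefl t (hreflB t h)
  have hcard := congrArg Finset.card hun
  rw [Finset.card_union_of_disjoint hdisj] at hcard
  omega

end
end HeckeOrthAux


/-- `g^∨ = ∑ c_w h_{w⁻¹}` for `g = ∑ c_w h_w`. -/
noncomputable def veeH {W : Type*} [Group W] [Fintype W] {K : Type*} [Field K]
    {H : Type*} [Ring H] [Algebra K H] (hb : Module.Basis W K H) (h : W → H) (g : H) : H :=
  ∑ x : W, hb.repr g x • h x⁻¹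

/-- The inner product `(f,g)^H`: the coefficient of `h_{w0}` in `f * g^∨`. -/
noncomputable def heckeInner {W : Type*} [Group W] [Fintype W] {K : Type*} [Field K]
    {H : Type*} [Ring H] [Algebra K H] (hb : Module.Basis W K H) (h : W → H) (w0 : W) (f g : H) : K :=
  hb.repr (f * veeH hb h g) w0

/-- orthogonality `(h_v, ĥ_{w0 w})^H = δ_{v,w}`, where `ĥ` is the involution
determined by `ĥ_i = h_i - (t1+t2)`, `t̂1 = -t2`, `t̂2 = -t1` (so that `ĥ_u` for `u ∈ W` is
the corresponding product of the `ĥ_i` along a reduced word for `u`). -/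
theorem heckeInner_h_hhat_orthogonality
    {r : ℕ} {W : Type*} [Group W] [Fintype W] [DecidableEq W] {M : CoxeterMatrix (Fin r)}
    (cs : CoxeterSystem M W)
    {Λ : Type*} [AddCommGroup Λ] (wΛ : W →* Multiplicative (AddAut Λ)) (α : Fin r → Λ)
    (coroot : Fin r → (Λ →+ ℤ))
    (hact : ∀ (i : Fin r) (lam : Λ), Multiplicative.toAdd (wΛ (cs.simple i)) lam = lam - (coroot i lam) • α i)
    (hαα : ∀ i : Fin r, coroot i (α i) = 2)
    (hindep : LinearIndependent ℤ α)
    (hcart : ∀ i j : Fin r, i ≠ j →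
      (M.M i j = 2 ∧ coroot i (α j) = 0 ∧ coroot j (α i) = 0) ∨
      (M.M i j = 3 ∧ coroot i (α j) = -1 ∧ coroot j (α i) = -1) ∨
      (M.M i j = 4 ∧ coroot i (α j) * coroot j (α i) = 2 ∧
        coroot i (α j) < 0 ∧ coroot j (α i) < 0) ∨
      (M.M i j = 6 ∧ coroot i (α j) * coroot j (α i) = 3 ∧
        coroot i (α j) < 0 ∧ coroot j (α i) < 0))
    {K : Type*} [Field K] (exp : Multiplicative Λ →* Kˣ)
    (hexp_inj : Function.Injective exp)
    (t1 t2 : K) (wK : W →* RingAut K)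
    (hwexp : ∀ (w : W) (lam : Λ),
      wK w ((exp (Multiplicative.ofAdd lam) : Kˣ) : K)
        = ((exp (Multiplicative.ofAdd (Multiplicative.toAdd (wΛ w) lam)) : Kˣ) : K))
    (hwt1 : ∀ w : W, wK w t1 = t1) (hwt2 : ∀ w : W, wK w t2 = t2)
    {H : Type*} [Ring H] [Algebra K H]
    (h : W → H) (hb : Module.Basis W K H)
    (hbasis : ∀ w : W, hb w = h w)
    (hone : h 1 = 1)
    (hmul : ∀ u v : W, cs.length (u * v) = cs.length u + cs.length v →
      h (u * v) = h u * h v)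
    (hquad : ∀ i : Fin r,
      (h (cs.simple i) - algebraMap K H t1) * (h (cs.simple i) - algebraMap K H t2) = 0)
    (w0 : W) (hw0 : ∀ u : W, cs.length u ≤ cs.length w0)
    (hhat : W → H) (hhat_one : hhat 1 = 1)
    (hhat_mul : ∀ u v : W, cs.length (u * v) = cs.length u + cs.length v →
      hhat (u * v) = hhat u * hhat v)
    (hhat_simple : ∀ i : Fin r,
      hhat (cs.simple i) = h (cs.simple i) - algebraMap K H (t1 + t2))
    (v w : W) :
    heckeInner hb h w0 (h v) (hhat (w0 * w)) = if v = w then 1 else 0 := by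
  classical
  -- length facts from the cocycle theory
  have hlen : ∀ x : W, cs.length x + cs.length (x⁻¹ * w0) = cs.length w0 :=
    HeckeOrthAux.length_add_of_max cs w0 hw0
  have hw0sq : w0 * w0 = 1 := by
    have h1 := hlen w0⁻¹
    rw [cs.length_inv, inv_inv] at h1
    exact (cs.length_eq_zero_iff).mp (by omega)
  have hw0inv : w0⁻¹ = w0 := inv_eq_of_mul_eq_one_right hw0sq
  -- scalar bookkeeping
  have hsmul : ∀ (c : K) (x : H), algebraMap K H c * x = c • x := by
    intro c x; rw [Algebra.smul_def]
  have hsmul' : ∀ (c : K) (x : H), x * algebraMap K H c = c • x := by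
    intro c x; rw [← Algebra.commutes, Algebra.smul_def]
  -- quadratic relation
  have hsq : ∀ i : Fin r, h (cs.simple i) * h (cs.simple i)
      = (t1 + t2) • h (cs.simple i) - (t1 * t2) • (1 : H) := by
    intro i
    have h0 := hquad i
    set x := h (cs.simple i) with hx
    have e1 : x * x - x * algebraMap K H t2 - algebraMap K H t1 * x
        + algebraMap K H t1 * algebraMap K H t2 = 0 := by
      rw [← h0]; noncomm_ring
    have e3 : x * x - (x * algebraMap K H t2 + algebraMap K H t1 * x
        - algebraMap K H t1 * algebraMap K H t2) = 0 := by
      rw [show x * x - (x * algebraMap K H t2 + algebraMap K H t1 * x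
        - algebraMap K H t1 * algebraMap K H t2) = x * x - x * algebraMap K H t2
        - algebraMap K H t1 * x + algebraMap K H t1 * algebraMap K H t2 from by abel, e1]
    have e2 := sub_eq_zero.mp e3
    rw [e2, hsmul', hsmul, ← map_mul, Algebra.algebraMap_eq_smul_one, add_smul]
    abel
  -- multiplication by simple generators
  have hmulR : ∀ (u : W) (i : Fin r), cs.length (u * cs.simple i) = cs.length u + 1 →
      h (u * cs.simple i) = h u * h (cs.simple i) := by
    intro u i hL
    exact hmul u (cs.simple i) (by rw [cs.length_simple]; exact hL)
  have hmulL : ∀ (i : Fin r) (u : W), cs.length (cs.simple i * u) = cs.length u + 1 →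
      h (cs.simple i * u) = h (cs.simple i) * h u := by
    intro i u hL
    exact hmul (cs.simple i) u (by rw [cs.length_simple]; omega)
  have F2up : ∀ (u : W) (i : Fin r), cs.length (u * cs.simple i) = cs.length u + 1 →
      h u * hhat (cs.simple i) = h (u * cs.simple i) - (t1 + t2) • h u := by
    intro u i hL
    rw [hhat_simple, mul_sub, hsmul', hmulR u i hL]
  have F2down : ∀ (u : W) (i : Fin r), cs.length (u * cs.simple i) + 1 = cs.length u →
      h u * hhat (cs.simple i) = (-(t1 * t2)) • h (u * cs.simple i) := by
    intro u i hL
    have hu : (u * cs.simple i) * cs.simple i = u := cs.simple_mul_simple_cancel_right i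
    have hh : h u = h (u * cs.simple i) * h (cs.simple i) := by
      conv_lhs => rw [← hu]
      exact hmulR (u * cs.simple i) i (by rw [hu]; omega)
    rw [hh, hhat_simple, mul_assoc, mul_sub, hsmul', hsq]
    rw [show (t1 + t2) • h (cs.simple i) - (t1 * t2) • (1 : H)
        - (t1 + t2) • h (cs.simple i) = (-(t1 * t2)) • (1 : H) from by
      rw [neg_smul]; abel]
    rw [mul_smul_comm, mul_one]
  have F3up : ∀ (i : Fin r) (u : W), cs.length (cs.simple i * u) = cs.length u + 1 →
      hhat (cs.simple i) * h u = h (cs.simple i * u) - (t1 + t2) • h u := by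
    intro i u hL
    rw [hhat_simple, sub_mul, hsmul, hmulL i u hL]
  have F3down : ∀ (i : Fin r) (u : W), cs.length (cs.simple i * u) + 1 = cs.length u →
      hhat (cs.simple i) * h u = (-(t1 * t2)) • h (cs.simple i * u) := by
    intro i u hL
    have hu : cs.simple i * (cs.simple i * u) = u := cs.simple_mul_simple_cancel_left i
    have hh : h u = h (cs.simple i) * h (cs.simple i * u) := by
      conv_lhs => rw [← hu]
      exact hmulL i (cs.simple i * u) (by rw [hu]; omega)
    rw [hh, hhat_simple, ← mul_assoc, sub_mul, hsmul, hsq]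
    rw [show (t1 + t2) • h (cs.simple i) - (t1 * t2) • (1 : H)
        - (t1 + t2) • h (cs.simple i) = (-(t1 * t2)) • (1 : H) from by
      rw [neg_smul]; abel]
    rw [smul_mul_assoc, one_mul]
  -- the linear map `veeH`
  have vadd : ∀ x y : H, veeH hb h (x + y) = veeH hb h x + veeH hb h y := by
    intro x y
    simp only [veeH, map_add, Finsupp.add_apply, add_smul, Finset.sum_add_distrib]
  have vsmul : ∀ (c : K) (x : H), veeH hb h (c • x) = c • veeH hb h x := by
    intro c x
    simp only [veeH, map_smul, Finsupp.smul_apply, smul_eq_mul, mul_smul, Finset.smul_sum]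
  let Vlin : H →ₗ[K] H :=
    { toFun := veeH hb h
      map_add' := vadd
      map_smul' := fun c x => vsmul c x }
  have VlinEq : ∀ x : H, Vlin x = veeH hb h x := fun _ => rfl
  have vbasis : ∀ u : W, Vlin (h u) = h u⁻¹ := by
    intro u
    rw [VlinEq, show h u = hb u from (hbasis u).symm]
    simp only [veeH, Module.Basis.repr_self, Finsupp.single_apply, ite_smul, one_smul, zero_smul]
    rw [Finset.sum_ite_eq]
    simp
  have vcomm : ∀ (i : Fin r) (x : H),
      Vlin (x * hhat (cs.simple i)) = hhat (cs.simple i) * Vlin x := by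
    intro i
    suffices hsuff : (Vlin ∘ₗ LinearMap.mulRight K (hhat (cs.simple i)))
        = (LinearMap.mulLeft K (hhat (cs.simple i))) ∘ₗ Vlin by
      intro x
      have hx := LinearMap.congr_fun hsuff x
      simpa using hx
    apply Module.Basis.ext hb
    intro u
    simp only [LinearMap.comp_apply, LinearMap.mulRight_apply, LinearMap.mulLeft_apply]
    rw [hbasis u]
    have hinv1 : (u * cs.simple i)⁻¹ = cs.simple i * u⁻¹ := by
      rw [mul_inv_rev, cs.inv_simple]
    rcases cs.length_mul_simple u i with hup | hdown
    · have hl : cs.length (cs.simple i * u⁻¹) = cs.length u⁻¹ + 1 := by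
        rw [← hinv1, cs.length_inv, cs.length_inv, hup]
      rw [F2up u i hup, map_sub, map_smul, vbasis, vbasis, hinv1, F3up i u⁻¹ hl]
    · have hl : cs.length (cs.simple i * u⁻¹) + 1 = cs.length u⁻¹ := by
        rw [← hinv1, cs.length_inv, cs.length_inv]
        exact hdown
      rw [F2down u i hdown, map_smul, vbasis, vbasis, hinv1, F3down i u⁻¹ hl]
  have P7 : ∀ u : W, Vlin (hhat u) = hhat u⁻¹ := by
    suffices hsuff : ∀ (n : ℕ) (u : W), cs.length u = n → Vlin (hhat u) = hhat u⁻¹ by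
      intro u; exact hsuff (cs.length u) u rfl
    intro n
    induction n using Nat.strong_induction_on with
    | _ n ih =>
      intro u hu
      by_cases h1 : u = 1
      · subst h1
        rw [hhat_one, inv_one, hhat_one, show (1 : H) = h 1 from hone.symm, vbasis, inv_one,
          hone]
      · obtain ⟨i, hi⟩ := cs.exists_rightDescent_of_ne_one h1
        have hi' : cs.length (u * cs.simple i) + 1 = cs.length u := (cs.isRightDescent_iff).mp hi
        have hcan : (u * cs.simple i) * cs.simple i = u := cs.simple_mul_simple_cancel_right i
        have hsplit : hhat u = hhat (u * cs.simple i) * hhat (cs.simple i) := by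
          conv_lhs => rw [← hcan]
          exact hhat_mul (u * cs.simple i) (cs.simple i)
            (by rw [hcan, cs.length_simple]; omega)
        rw [hsplit, vcomm, ih (cs.length (u * cs.simple i)) (by omega) _ rfl]
        have hlast : cs.simple i * (u * cs.simple i)⁻¹ = u⁻¹ := by
          rw [mul_inv_rev, cs.inv_simple, cs.simple_mul_simple_cancel_left]
        have hlen2 : cs.length (cs.simple i * (u * cs.simple i)⁻¹)
            = cs.length (cs.simple i) + cs.length ((u * cs.simple i)⁻¹) := by
          rw [hlast, cs.length_simple, cs.length_inv, cs.length_inv]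
          omega
        rw [← hhat_mul (cs.simple i) ((u * cs.simple i)⁻¹) hlen2, hlast]
  -- the coefficient functional
  have cosub : ∀ x y : H, hb.repr (x - y) w0 = hb.repr x w0 - hb.repr y w0 := by
    intro x y; rw [map_sub]; rfl
  have cosmul : ∀ (c : K) (x : H), hb.repr (c • x) w0 = c * hb.repr x w0 := by
    intro c x; rw [map_smul]; rfl
  -- main orthogonality computation
  have P8 : ∀ (n : ℕ) (u v' : W), cs.length u = n →
      hb.repr (h v' * hhat u) w0 = if u = v'⁻¹ * w0 then 1 else 0 := by
    intro n
    induction n using Nat.strong_induction_on with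
    | _ n ih =>
      intro u v' hu
      by_cases h1 : u = 1
      · subst h1
        rw [hhat_one, mul_one, show h v' = hb v' from (hbasis v').symm, Module.Basis.repr_self,
          Finsupp.single_apply]
        have hiff : (v' = w0) ↔ (1 = v'⁻¹ * w0) := by
          constructor
          · rintro rfl; rw [inv_mul_cancel]
          · intro hh
            have h2 : v' * 1 = v' * (v'⁻¹ * w0) := congrArg (v' * ·) hh
            rwa [mul_one, ← mul_assoc, mul_inv_cancel, one_mul] at h2
        rw [if_congr hiff rfl rfl]
      · obtain ⟨i, hi⟩ := cs.exists_leftDescent_of_ne_one h1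
        have hi' : cs.length (cs.simple i * u) + 1 = cs.length u := (cs.isLeftDescent_iff).mp hi
        set u' := cs.simple i * u with hu'
        have hback : cs.simple i * u' = u := cs.simple_mul_simple_cancel_left i
        have hsplit : hhat u = hhat (cs.simple i) * hhat u' := by
          conv_lhs => rw [← hback]
          exact hhat_mul (cs.simple i) u' (by rw [hback, cs.length_simple]; omega)
        have hfact1 : (u' = (v' * cs.simple i)⁻¹ * w0) ↔ (u = v'⁻¹ * w0) := by
          rw [mul_inv_rev, cs.inv_simple]
          constructor
          · intro hh
            rw [← hback, hh, mul_assoc, cs.simple_mul_simple_cancel_left]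
          · intro hh
            rw [hu', hh, mul_assoc]
        rw [hsplit, ← mul_assoc]
        rcases cs.length_mul_simple v' i with hvup | hvdown
        · rw [F2up v' i hvup, sub_mul, smul_mul_assoc, cosub, cosmul,
            ih (cs.length u') (by omega) u' (v' * cs.simple i) rfl,
            ih (cs.length u') (by omega) u' v' rfl]
          have hfact2 : ¬ (u' = v'⁻¹ * w0) := by
            intro heq
            have l1 := hlen v'
            have l2 := hlen (v' * cs.simple i)
            rw [← heq] at l1
            have he2 : (v' * cs.simple i)⁻¹ * w0 = u := by
              rw [mul_inv_rev, cs.inv_simple, mul_assoc, ← heq, hback]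
            rw [he2] at l2
            omega
          rw [if_neg hfact2, mul_zero, sub_zero, if_congr hfact1 rfl rfl]
        · rw [F2down v' i hvdown, smul_mul_assoc, cosmul,
            ih (cs.length u') (by omega) u' (v' * cs.simple i) rfl]
          have hfact3 : ¬ (u = v'⁻¹ * w0) := by
            intro heq
            have l1 := hlen v'
            have l2 := hlen (v' * cs.simple i)
            rw [← heq] at l1
            have hequ' : u' = (v' * cs.simple i)⁻¹ * w0 := hfact1.mpr heq
            rw [← hequ'] at l2
            omega
          rw [if_neg (fun hh => hfact3 (hfact1.mp hh)), mul_zero, if_neg hfact3]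
  -- conclusion
  show hb.repr (h v * veeH hb h (hhat (w0 * w))) w0 = _
  rw [← VlinEq (hhat (w0 * w)), P7, P8 (cs.length ((w0 * w)⁻¹)) ((w0 * w)⁻¹) v rfl]
  have hfin : ((w0 * w)⁻¹ = v⁻¹ * w0) ↔ (v = w) := by
    rw [mul_inv_rev, hw0inv]
    constructor
    · intro hh
      have h2 := mul_right_cancel hh
      exact (inv_injective h2).symm
    · rintro rfl; rfl
  rw [if_congr hfin rfl rfl]
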